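/- Let b₁ > 0 and let (aₙ)ₙ≥1 be a decreasing sequence of positive reals with ∑ₙ aₙ < ∞. Define b₁ = a₁ and inductively bₙ = max{bₙ₋₁/e, aₙ} for n > 1. Then bₙ ≥ bₙ₊₁ ≥ bₙ/e and bₙ ≥ aₙ for all n, and ∑ₙ bₙ ≤ (e/(e-1)) ∑ₙ aₙ < ∞. -/

import Mathlib

/-- Let `(aₙ)` be a decreasing sequence of positive reals with `∑ aₙ < ∞`, and define
`b₀ = a₀`, `bₙ₊₁ = max (bₙ / e) aₙ₊₁`. Then `bₙ ≥ bₙ₊₁ ≥ bₙ / e`, `bₙ ≥ aₙ` for all `n`,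
`(bₙ)` is summable, and `∑ bₙ ≤ (e/(e-1)) ∑ aₙ`. -/
theorem stmt_2 (a b : ℕ → ℝ)
    (ha_pos : ∀ n, 0 < a n)
    (ha_dec : ∀ n, a (n + 1) ≤ a n)
    (ha_sum : Summable a)
    (hb0 : b 0 = a 0)
    (hbrec : ∀ n, b (n + 1) = max (b n / Real.exp 1) (a (n + 1))) :
    (∀ n, b (n + 1) ≤ b n ∧ b n / Real.exp 1 ≤ b (n + 1) ∧ a n ≤ b n) ∧
      Summable b ∧
      ∑' n, b n ≤ (Real.exp 1 / (Real.exp 1 - 1)) * ∑' n, a n := by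
  have he : (1 : ℝ) < Real.exp 1 := by
    have := Real.add_one_lt_exp (x := 1) one_ne_zero
    linarith
  have he0 : (0 : ℝ) < Real.exp 1 := by linarith
  have hab : ∀ n, a n ≤ b n := by
    intro n
    cases n with
    | zero => rw [hb0]
    | succ n => rw [hbrec]; exact le_max_right _ _
  have hbpos : ∀ n, 0 < b n := fun n => lt_of_lt_of_le (ha_pos n) (hab n)
  have part1 : ∀ n, b (n + 1) ≤ b n ∧ b n / Real.exp 1 ≤ b (n + 1) ∧ a n ≤ b n := by
    intro n
    refine ⟨?_, ?_, hab n⟩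
    · rw [hbrec]
      apply max_le
      · exact div_le_self (hbpos n).le he.le
      · exact le_trans (ha_dec n) (hab n)
    · rw [hbrec]; exact le_max_left _ _
  -- dominating sequence
  set r : ℝ := (Real.exp 1)⁻¹ with hrdef
  have hr0 : 0 < r := inv_pos.mpr he0
  have hr1 : r < 1 := by rw [hrdef, inv_lt_one_iff₀]; right; exact he
  set c : ℕ → ℝ := fun n => ∑ kl ∈ Finset.HasAntidiagonal.antidiagonal n, a kl.1 * r ^ kl.2 with hcdef
  have hcrec : ∀ n, c (n + 1) = a (n + 1) + r * c n := by
    intro n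
    rw [hcdef]
    simp only
    rw [Finset.Nat.antidiagonal_succ', Finset.sum_cons, Finset.sum_map, Finset.mul_sum]
    simp [pow_succ, mul_comm, mul_assoc, mul_left_comm]
  have hbc : ∀ n, b n ≤ c n := by
    intro n
    induction n with
    | zero => simp [hcdef, hb0]
    | succ n ih =>
      rw [hbrec, hcrec]
      apply max_le
      · have : b n / Real.exp 1 = r * b n := by rw [hrdef]; ring
        rw [this]
        have h1 : r * b n ≤ r * c n := by nlinarith
        nlinarith [ha_pos (n + 1)]
      · have hc0 : 0 < c n := lt_of_lt_of_le (hbpos n) ih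
        nlinarith
  have hna : Summable fun n => ‖a n‖ := by
    simpa [Real.norm_of_nonneg (ha_pos _).le] using ha_sum
  have hng : Summable fun n : ℕ => ‖r ^ n‖ := by
    simp only [norm_pow, Real.norm_of_nonneg hr0.le]
    exact summable_geometric_of_lt_one hr0.le hr1
  have hcsum : Summable c := by
    have := summable_norm_sum_mul_antidiagonal_of_summable_norm hna hng
    exact this.of_norm
  have hbsum : Summable b := hcsum.of_nonneg_of_le (fun n => (hbpos n).le) hbc
  refine ⟨part1, hbsum, ?_⟩
  have h1 : ∑' n, b n ≤ ∑' n, c n := Summable.tsum_le_tsum hbc hbsum hcsum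
  have h2 : ∑' n, c n = (∑' n, a n) * ∑' n : ℕ, r ^ n :=
    (tsum_mul_tsum_eq_tsum_sum_antidiagonal_of_summable_norm hna hng).symm
  have h3 : ∑' n : ℕ, r ^ n = Real.exp 1 / (Real.exp 1 - 1) := by
    rw [tsum_geometric_of_lt_one hr0.le hr1, hrdef]
    field_simp
  rw [h2, h3] at h1
  linarith [h1, mul_comm (∑' n, a n) (Real.exp 1 / (Real.exp 1 - 1))]
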